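/- One has ∫₀^{X/2} w(x) dx ≤ (1 / cosh(X/2)) · ∫_{X/2}^{X} w(x) dx. -/

import Mathlib

/-- Monotonicity from a nonnegative derivative on a closed interval. -/
lemma mono_aux_hme {a b : ℝ} {f f' : ℝ → ℝ}
    (hf : ∀ x ∈ Set.Icc a b, HasDerivWithinAt f (f' x) (Set.Icc a b) x)
    (h0 : ∀ x ∈ Set.Icc a b, 0 ≤ f' x) : MonotoneOn f (Set.Icc a b) := by
  apply monotoneOn_of_hasDerivWithinAt_nonneg (convex_Icc a b)
    (fun x hx => (hf x hx).continuousWithinAt) (f' := f')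
  · intro x hx
    exact ((hf x (interior_subset hx)).mono interior_subset)
  · intro x hx
    exact h0 x (interior_subset hx)

/-- If `w ≥ 0`, `w'' ≥ w` on `[0,X]` and `w'(0) ≥ 0`, then
`∫₀^{X/2} w ≤ (1/cosh(X/2)) ∫_{X/2}^X w`. -/
theorem half_mass_estimate
    (X : ℝ) (hX : 0 < X)
    (w w' w'' : ℝ → ℝ)
    (hw' : ∀ x ∈ Set.Icc (0:ℝ) X, HasDerivWithinAt w (w' x) (Set.Icc 0 X) x)
    (hw'' : ∀ x ∈ Set.Icc (0:ℝ) X, HasDerivWithinAt w' (w'' x) (Set.Icc 0 X) x)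
    (hw''cont : ContinuousOn w'' (Set.Icc 0 X))
    (hwnonneg : ∀ x ∈ Set.Icc (0:ℝ) X, 0 ≤ w x)
    (hconvex : ∀ x ∈ Set.Icc (0:ℝ) X, w x ≤ w'' x)
    (hw'0 : 0 ≤ w' 0) :
    (∫ x in (0:ℝ)..(X/2), w x) ≤ (1 / Real.cosh (X/2)) * ∫ x in (X/2)..X, w x := by
  set T : ℝ := X / 2 with hT
  have hT0 : 0 < T := by positivity
  have hTX : T ≤ X := by linarith
  -- w' is nonnegative on [0,X]
  have hw'nonneg : ∀ x ∈ Set.Icc (0:ℝ) X, 0 ≤ w' x := by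
    have hmono : MonotoneOn w' (Set.Icc 0 X) :=
      mono_aux_hme hw'' (fun x hx => le_trans (hwnonneg x hx) (hconvex x hx))
    intro x hx
    have h0 : (0:ℝ) ∈ Set.Icc (0:ℝ) X := ⟨le_refl 0, le_of_lt hX⟩
    exact le_trans hw'0 (hmono h0 hx hx.1)
  -- key pointwise estimate
  have key : ∀ x ∈ Set.Icc (0:ℝ) T, Real.cosh T * w x ≤ w (x + T) := by
    intro x hx
    have hxX : x ∈ Set.Icc (0:ℝ) X := ⟨hx.1, le_trans hx.2 hTX⟩
    have hmaps : Set.MapsTo (fun s : ℝ => x + s) (Set.Icc 0 T) (Set.Icc 0 X) := by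
      intro s hs
      simp only [Set.mem_Icc] at hs ⊢
      have h1 := hx.1; have h2 := hx.2
      constructor <;> [linarith [hs.1]; · simp only [hT] at *; linarith [hs.2]]
    -- derivative of s ↦ w (x+s)
    have hA : ∀ s ∈ Set.Icc (0:ℝ) T,
        HasDerivWithinAt (fun s => w (x + s)) (w' (x + s)) (Set.Icc 0 T) s := by
      intro s hs
      have h1 : HasDerivWithinAt (fun s : ℝ => x + s) 1 (Set.Icc 0 T) s :=
        (hasDerivWithinAt_id s _).const_add x
      have := (hw' (x + s) (hmaps hs)).comp s h1 hmaps
      simpa [Function.comp_def] using this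
    have hA' : ∀ s ∈ Set.Icc (0:ℝ) T,
        HasDerivWithinAt (fun s => w' (x + s)) (w'' (x + s)) (Set.Icc 0 T) s := by
      intro s hs
      have h1 : HasDerivWithinAt (fun s : ℝ => x + s) 1 (Set.Icc 0 T) s :=
        (hasDerivWithinAt_id s _).const_add x
      have := (hw'' (x + s) (hmaps hs)).comp s h1 hmaps
      simpa [Function.comp_def] using this
    -- F s = exp(-s) * (g' + g)
    set F : ℝ → ℝ := fun s => Real.exp (-s) *
      ((w' (x + s) - Real.sinh s * w x) + (w (x + s) - Real.cosh s * w x)) with hF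
    have hFderiv : ∀ s ∈ Set.Icc (0:ℝ) T,
        HasDerivWithinAt F (Real.exp (-s) * (w'' (x + s) - w (x + s))) (Set.Icc 0 T) s := by
      intro s hs
      have he : HasDerivWithinAt (fun s : ℝ => Real.exp (-s)) (-Real.exp (-s)) (Set.Icc 0 T) s := by
        simpa [Function.comp_def] using ((Real.hasDerivAt_exp (-s)).comp s ((hasDerivAt_id s).neg)).hasDerivWithinAt
      have hP : HasDerivWithinAt
          (fun s => (w' (x + s) - Real.sinh s * w x) + (w (x + s) - Real.cosh s * w x))
          ((w'' (x + s) - Real.cosh s * w x) + (w' (x + s) - Real.sinh s * w x))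
          (Set.Icc 0 T) s := by
        exact (((hA' s hs).sub (((Real.hasDerivAt_sinh s).hasDerivWithinAt).mul_const (w x)))).add
          (((hA s hs).sub (((Real.hasDerivAt_cosh s).hasDerivWithinAt).mul_const (w x))))
      have := he.mul hP
      exact this.congr_deriv (by ring)
    have hFnonneg : ∀ s ∈ Set.Icc (0:ℝ) T, 0 ≤ F s := by
      have hmono : MonotoneOn F (Set.Icc 0 T) := by
        apply mono_aux_hme hFderiv
        intro s hs
        have hxs : x + s ∈ Set.Icc (0:ℝ) X := hmaps hs
        have := hconvex (x + s) hxs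
        have : (0:ℝ) ≤ w'' (x + s) - w (x + s) := by linarith
        positivity
      intro s hs
      have h0 : (0:ℝ) ∈ Set.Icc (0:ℝ) T := ⟨le_refl 0, le_of_lt hT0⟩
      have hF0 : F 0 = w' x := by simp [hF]
      have := hmono h0 hs hs.1
      rw [hF0] at this
      exact le_trans (hw'nonneg x hxX) this
    -- G s = exp s * g
    set G : ℝ → ℝ := fun s => Real.exp s * (w (x + s) - Real.cosh s * w x) with hG
    have hGderiv : ∀ s ∈ Set.Icc (0:ℝ) T,
        HasDerivWithinAt G
          (Real.exp s * ((w' (x + s) - Real.sinh s * w x) + (w (x + s) - Real.cosh s * w x)))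
          (Set.Icc 0 T) s := by
      intro s hs
      have he : HasDerivWithinAt Real.exp (Real.exp s) (Set.Icc 0 T) s :=
        (Real.hasDerivAt_exp s).hasDerivWithinAt
      have hg : HasDerivWithinAt (fun s => w (x + s) - Real.cosh s * w x)
          (w' (x + s) - Real.sinh s * w x) (Set.Icc 0 T) s :=
        (hA s hs).sub (((Real.hasDerivAt_cosh s).hasDerivWithinAt).mul_const (w x))
      have := he.mul hg
      exact this.congr_deriv (by ring)
    have hGmono : MonotoneOn G (Set.Icc 0 T) := by
      apply mono_aux_hme hGderiv
      intro s hs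
      have hFs := hFnonneg s hs
      have hexp : (0:ℝ) < Real.exp (-s) := Real.exp_pos _
      have hsum : 0 ≤ (w' (x + s) - Real.sinh s * w x) + (w (x + s) - Real.cosh s * w x) :=
        nonneg_of_mul_nonneg_right (by simpa [hF] using hFs) hexp
      positivity
    have h0 : (0:ℝ) ∈ Set.Icc (0:ℝ) T := ⟨le_refl 0, le_of_lt hT0⟩
    have hTmem : T ∈ Set.Icc (0:ℝ) T := ⟨le_of_lt hT0, le_refl T⟩
    have hG0 : G 0 = 0 := by simp [hG]
    have := hGmono h0 hTmem (le_of_lt hT0)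
    rw [hG0] at this
    have hexp : (0:ℝ) < Real.exp T := Real.exp_pos _
    have hd : 0 ≤ w (x + T) - Real.cosh T * w x :=
      nonneg_of_mul_nonneg_right (by simpa [hG] using this) hexp
    linarith
  -- continuity and integrability
  have hwcont : ContinuousOn w (Set.Icc 0 X) := fun x hx => (hw' x hx).continuousWithinAt
  have hint1 : IntervalIntegrable (fun x => Real.cosh T * w x) MeasureTheory.volume 0 T := by
    apply ContinuousOn.intervalIntegrable
    rw [Set.uIcc_of_le (le_of_lt hT0)]
    exact (hwcont.mono (Set.Icc_subset_Icc_right hTX)).const_smul (Real.cosh T)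
  have hint2 : IntervalIntegrable (fun x => w (x + T)) MeasureTheory.volume 0 T := by
    apply ContinuousOn.intervalIntegrable
    rw [Set.uIcc_of_le (le_of_lt hT0)]
    apply hwcont.comp (continuous_id.add continuous_const).continuousOn
    intro s hs
    simp only [Set.mem_Icc, id, Pi.add_apply, id_eq] at hs ⊢
    constructor
    · linarith [hs.1, hT0.le]
    · simp only [hT] at hs ⊢; linarith [hs.2]
  have hIle : (∫ x in (0:ℝ)..T, Real.cosh T * w x) ≤ ∫ x in (0:ℝ)..T, w (x + T) :=
    intervalIntegral.integral_mono_on (le_of_lt hT0) hint1 hint2 key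
  have hshift : (∫ x in (0:ℝ)..T, w (x + T)) = ∫ x in T..X, w x := by
    rw [intervalIntegral.integral_comp_add_right]
    have : T + T = X := by simp only [hT]; ring
    rw [zero_add, this]
  rw [intervalIntegral.integral_const_mul] at hIle
  rw [hshift] at hIle
  have hcosh : (0:ℝ) < Real.cosh T := Real.cosh_pos T
  rw [one_div, ← div_eq_inv_mul, le_div_iff₀ hcosh]
  linarith [hIle]
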